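/- arXiv:2405.18142 — 4 statements merged into one kernel-verified Lean document; each statement's English description precedes it below -/
import Mathlib

section
/- Let Φ_x ∈ ℝ^{(T+1)n×(T+1)n} and Φ_u ∈ ℝ^{(T+1)m×(T+1)n} be block lower triangular and satisfy the nominal SLS constraint (I − Z𝒜̂)Φ_x − Zℬ̂Φ_u = I. Then Φ_x is invertible; moreover, setting K = Φ_u Φ_x⁻¹, the matrix I − Z(𝒜̂ + ℬ̂K) is invertible, (I − Z(𝒜̂ + ℬ̂K))⁻¹ = Φ_x, and K(I − Z(𝒜̂ + ℬ̂K))⁻¹ = Φ_u. In other words, the state-feedback gain K = Φ_u Φ_x⁻¹ realizes exactly the closed-loop system responses Φ_x, Φ_u for the dynamics (𝒜̂, ℬ̂). -/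
open MeasureTheory Matrix
open scoped ENNReal

/-- The ℓ¹-norm of a vector. -/
noncomputable def l1norm {ι : Type*} [Fintype ι] (v : ι → ℝ) : ℝ := ∑ i, |v i|

/-- The induced ℓ¹-norm of a matrix (maximum absolute column sum). -/
noncomputable def matL1 {ι κ : Type*} [Fintype ι] [Fintype κ] (M : Matrix ι κ ℝ) : ℝ :=
  ⨆ j, ∑ i, |M i j|

/-- The Wasserstein-1 distance (w.r.t. the ℓ¹-norm): infimum over couplings of the expected
ℓ¹-distance. -/
noncomputable def wass {ι : Type*} [Fintype ι] (P Q : Measure (ι → ℝ)) : ℝ :=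
  sInf { r | ∃ π : Measure ((ι → ℝ) × (ι → ℝ)),
    IsProbabilityMeasure π ∧ π.map Prod.fst = P ∧ π.map Prod.snd = Q ∧
    r = ∫ p, l1norm (p.1 - p.2) ∂π }

/-- The uniform empirical measure `(1/N) ∑ᵢ δ_{a i}`. -/
noncomputable def emp {ι : Type*} [Fintype ι] {N : ℕ} (a : Fin N → (ι → ℝ)) :
    Measure (ι → ℝ) :=
  (N : ℝ≥0∞)⁻¹ • ∑ i, Measure.dirac (a i)

/-- The block-downshift matrix `Z`, with `n × n` identity blocks on the first block
subdiagonal and zero blocks elsewhere. -/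
noncomputable def dshift (T n : ℕ) : Matrix (Fin (T+1) × Fin n) (Fin (T+1) × Fin n) ℝ :=
  fun p q => if (p.1 : ℕ) = (q.1 : ℕ) + 1 ∧ p.2 = q.2 then 1 else 0

/-- `blkdiag T M`: block-diagonal matrix with `T+1` copies of `M` on the diagonal. -/
noncomputable def blkdiag (T : ℕ) {n m : ℕ} (M : Matrix (Fin n) (Fin m) ℝ) :
    Matrix (Fin (T+1) × Fin n) (Fin (T+1) × Fin m) ℝ :=
  fun p q => if p.1 = q.1 then M p.2 q.2 else 0

/-- A block-partitioned matrix is block lower triangular: all blocks strictly above the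
block diagonal are zero. -/
def BlockLT {T n m : ℕ} (M : Matrix (Fin (T+1) × Fin m) (Fin (T+1) × Fin n) ℝ) : Prop :=
  ∀ p q, p.1 < q.1 → M p q = 0

/-- `Z * M` is strictly block lower triangular when `M` is block lower triangular. -/
lemma dshift_mul_blockLT {T n k : ℕ}
    (M : Matrix (Fin (T+1) × Fin n) (Fin (T+1) × Fin k) ℝ)
    (hM : BlockLT M) (p : Fin (T+1) × Fin n) (q : Fin (T+1) × Fin k)
    (hpq : p.1 ≤ q.1) : (dshift T n * M) p q = 0 := by
  rw [Matrix.mul_apply]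
  apply Finset.sum_eq_zero
  intro r _
  by_cases h : (p.1 : ℕ) = (r.1 : ℕ) + 1 ∧ p.2 = r.2
  · have hr : r.1 < q.1 := by
      have : (r.1 : ℕ) < (q.1 : ℕ) := by omega
      exact this
    rw [hM r q hr, mul_zero]
  · simp [dshift, h]

/-- `blkdiag A * Φ` is block lower triangular when `Φ` is. -/
lemma blkdiag_mul_blockLT {T n k l : ℕ} (A : Matrix (Fin k) (Fin n) ℝ)
    (Φ : Matrix (Fin (T+1) × Fin n) (Fin (T+1) × Fin l) ℝ) (hΦ : BlockLT Φ) :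
    BlockLT (blkdiag T A * Φ) := by
  intro p q hpq
  rw [Matrix.mul_apply]
  apply Finset.sum_eq_zero
  intro r _
  by_cases h : p.1 = r.1
  · have hr : r.1 < q.1 := h ▸ hpq
    rw [hΦ r q hr, mul_zero]
  · simp [blkdiag, h]

/-- Powers of strictly block lower triangular matrices vanish below the diagonal shift. -/
lemma strict_pow_zero {T n : ℕ} (N : Matrix (Fin (T+1) × Fin n) (Fin (T+1) × Fin n) ℝ)
    (hN : ∀ p q : Fin (T+1) × Fin n, p.1 ≤ q.1 → N p q = 0) :
    ∀ k (p q : Fin (T+1) × Fin n), (p.1 : ℕ) < (q.1 : ℕ) + k → (N ^ k) p q = 0 := by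
  intro k
  induction k with
  | zero =>
    intro p q h
    have : p ≠ q := by
      intro he; subst he; omega
    simpa [pow_zero] using Matrix.one_apply_ne this
  | succ k ih =>
    intro p q h
    rw [pow_succ, Matrix.mul_apply]
    apply Finset.sum_eq_zero
    intro r _
    by_cases hr : r.1 ≤ q.1
    · rw [hN r q hr, mul_zero]
    · have : (q.1 : ℕ) < (r.1 : ℕ) := by
        exact Fin.lt_iff_val_lt_val.mp (lt_of_not_ge hr)
      have : (p.1 : ℕ) < (r.1 : ℕ) + k := by omega
      rw [ih p r this, zero_mul]

/-- Block lower triangular `Φx, Φu` satisfying the nominal SLS constraint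
`(I − Z𝒜̂)Φx − Zℬ̂Φu = I` yield an invertible `Φx`; the gain `K = Φu Φx⁻¹` realizes exactly
the closed-loop responses `Φx, Φu` for the nominal dynamics. -/
theorem stmt0 {n m T : ℕ} (hn : 0 < n) (hm : 0 < m) (hT : 0 < T)
    (Ahat : Matrix (Fin n) (Fin n) ℝ) (Bhat : Matrix (Fin n) (Fin m) ℝ)
    (Φx : Matrix (Fin (T+1) × Fin n) (Fin (T+1) × Fin n) ℝ)
    (Φu : Matrix (Fin (T+1) × Fin m) (Fin (T+1) × Fin n) ℝ)
    (hx : BlockLT Φx) (hu : BlockLT Φu)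
    (hSLS : (1 - dshift T n * blkdiag T Ahat) * Φx - dshift T n * blkdiag T Bhat * Φu = 1)
    (K : Matrix (Fin (T+1) × Fin m) (Fin (T+1) × Fin n) ℝ) (hK : K = Φu * Φx⁻¹) :
    IsUnit Φx ∧
    IsUnit (1 - dshift T n * (blkdiag T Ahat + blkdiag T Bhat * K)) ∧
    (1 - dshift T n * (blkdiag T Ahat + blkdiag T Bhat * K))⁻¹ = Φx ∧
    K * (1 - dshift T n * (blkdiag T Ahat + blkdiag T Bhat * K))⁻¹ = Φu := by
  set N : Matrix (Fin (T+1) × Fin n) (Fin (T+1) × Fin n) ℝ :=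
    dshift T n * blkdiag T Ahat * Φx + dshift T n * blkdiag T Bhat * Φu with hNdef
  have hΦxN : Φx = 1 + N := by
    have h := hSLS
    rw [sub_mul, one_mul, sub_sub] at h
    rw [hNdef]
    exact sub_eq_iff_eq_add.mp h
  have hNstrict : ∀ p q : Fin (T+1) × Fin n, p.1 ≤ q.1 → N p q = 0 := by
    intro p q hpq
    rw [hNdef]
    have h1 : (dshift T n * blkdiag T Ahat * Φx) p q = 0 := by
      rw [Matrix.mul_assoc]
      exact dshift_mul_blockLT _ (blkdiag_mul_blockLT Ahat Φx hx) p q hpq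
    have h2 : (dshift T n * blkdiag T Bhat * Φu) p q = 0 := by
      rw [Matrix.mul_assoc]
      exact dshift_mul_blockLT _ (blkdiag_mul_blockLT Bhat Φu hu) p q hpq
    simp [Matrix.add_apply, h1, h2]
  have hNnil : IsNilpotent N := by
    refine ⟨T + 1, ?_⟩
    ext p q
    exact strict_pow_zero N hNstrict (T+1) p q (by omega)
  have hUx : IsUnit Φx := by
    rw [hΦxN]
    have : (1 : Matrix (Fin (T+1) × Fin n) (Fin (T+1) × Fin n) ℝ) + N = 1 - (-N) :=
      (sub_neg_eq_add 1 N).symm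
    rw [this]
    exact hNnil.neg.isUnit_one_sub
  have hinv : Φx⁻¹ * Φx = 1 := Matrix.nonsing_inv_mul Φx (Matrix.isUnit_iff_isUnit_det Φx |>.mp hUx)
  have hKx : K * Φx = Φu := by
    rw [hK, Matrix.mul_assoc, hinv, Matrix.mul_one]
  have hMx : (1 - dshift T n * (blkdiag T Ahat + blkdiag T Bhat * K)) * Φx = 1 := by
    have expand : (1 - dshift T n * (blkdiag T Ahat + blkdiag T Bhat * K)) * Φx =
        (1 - dshift T n * blkdiag T Ahat) * Φx - dshift T n * blkdiag T Bhat * (K * Φx) := by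
      noncomm_ring
      simp only [Matrix.mul_assoc]
    rw [expand, hKx, hSLS]
  have hUM : IsUnit (1 - dshift T n * (blkdiag T Ahat + blkdiag T Bhat * K)) :=
    ⟨⟨_, Φx, hMx, mul_eq_one_comm.mp hMx⟩, rfl⟩
  have hinvM : (1 - dshift T n * (blkdiag T Ahat + blkdiag T Bhat * K))⁻¹ = Φx :=
    Matrix.inv_eq_right_inv hMx
  exact ⟨hUx, hUM, hinvM, by rw [hinvM, hKx]⟩
end

section
/- Let Φ_x, Φ_u be block lower triangular and satisfy the nominal SLS constraint (I − Z𝒜̂)Φ_x − Zℬ̂Φ_u = I, let Φ = [Φ_x; Φ_u], and let A ∈ ℝ^{n×n}, B ∈ ℝ^{n×m} be the true system matrices with ΔA = Â − A, ΔB = B̂ − B and Δℳ = [blkdiag_{T+1}(ΔA) blkdiag_{T+1}(ΔB)]. Set 𝒜 = blkdiag_{T+1}(A), ℬ = blkdiag_{T+1}(B) and K = Φ_u Φ_x⁻¹. Then for every w ∈ ℝ^{(T+1)n} there exists a unique pair (x, u) ∈ ℝ^{(T+1)n} × ℝ^{(T+1)m} satisfying the true closed-loop equations x = Z𝒜x +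 Zℬu + w and u = Kx, and it is given by [x; u] = (I + ΦZΔℳ)⁻¹ Φ w. -/
open MeasureTheory Matrix
open scoped ENNReal

lemma grade_mul {ι κ μ : Type*} [Fintype κ] {gr : ι → ℕ} {gm : κ → ℕ} {gc : μ → ℕ}
    {A : Matrix ι κ ℝ} {B : Matrix κ μ ℝ}
    (hA : ∀ p q, A p q ≠ 0 → gm q ≤ gr p) (hB : ∀ p q, B p q ≠ 0 → gc q ≤ gm p) :
    ∀ p q, (A * B) p q ≠ 0 → gc q ≤ gr p := by
  intro p q h
  rw [Matrix.mul_apply] at h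
  obtain ⟨r, -, hr⟩ := Finset.exists_ne_zero_of_sum_ne_zero h
  exact le_trans (hB r q (right_ne_zero_of_mul hr)) (hA p r (left_ne_zero_of_mul hr))

lemma grade_add {ι κ : Type*} {gr : ι → ℕ} {gc : κ → ℕ}
    {A B : Matrix ι κ ℝ}
    (hA : ∀ p q, A p q ≠ 0 → gc q ≤ gr p) (hB : ∀ p q, B p q ≠ 0 → gc q ≤ gr p) :
    ∀ p q, (A + B) p q ≠ 0 → gc q ≤ gr p := by
  intro p q h
  by_cases hA' : A p q = 0
  · exact hB p q (by simpa [Matrix.add_apply, hA'] using h)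
  · exact hA p q hA'

lemma aux_nilpotent {ι : Type*} [Fintype ι] [DecidableEq ι] (g : ι → ℕ) (T : ℕ)
    (hg : ∀ i, g i ≤ T) (M : Matrix ι ι ℝ)
    (hM : ∀ p q, M p q ≠ 0 → g q + 1 ≤ g p) : M ^ (T+1) = 0 := by
  have key : ∀ k p q, g p < g q + k → (M ^ k) p q = 0 := by
    intro k
    induction k with
    | zero =>
      intro p q h
      rcases eq_or_ne p q with rfl | hne
      · omega
      · simp [Matrix.one_apply_ne hne]
    | succ k ih =>
      intro p q h
      rw [pow_succ, Matrix.mul_apply]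
      apply Finset.sum_eq_zero
      intro r _
      by_cases hr : M r q = 0
      · rw [hr, mul_zero]
      · have h2 := hM r q hr
        rw [ih p r (by omega), zero_mul]
  ext p q
  simpa using key (T+1) p q (by have := hg p; omega)

lemma aux_isUnit_one_add {ι : Type*} [Fintype ι] [DecidableEq ι] (M : Matrix ι ι ℝ)
    (h : IsNilpotent M) : IsUnit (1 + M) := by
  have := h.neg.isUnit_one_sub
  simpa using this

lemma blkdiag_sub (T : ℕ) {n m : ℕ} (M N : Matrix (Fin n) (Fin m) ℝ) :
    blkdiag T (M - N) = blkdiag T M - blkdiag T N := by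
  ext p q
  simp only [blkdiag, Matrix.sub_apply]
  split <;> simp


/-- Under the nominal SLS constraint, for every disturbance `w` the true
closed-loop equations `x = Z𝒜x + Zℬu + w`, `u = Kx` (with `K = Φu Φx⁻¹`) have a unique
solution, given by `[x; u] = (I + ΦZΔℳ)⁻¹ Φ w`. -/
theorem stmt3 {n m T : ℕ} (hn : 0 < n) (hm : 0 < m) (hT : 0 < T)
    (Ahat A : Matrix (Fin n) (Fin n) ℝ) (Bhat B : Matrix (Fin n) (Fin m) ℝ)
    (Φx : Matrix (Fin (T+1) × Fin n) (Fin (T+1) × Fin n) ℝ)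
    (Φu : Matrix (Fin (T+1) × Fin m) (Fin (T+1) × Fin n) ℝ)
    (hx : BlockLT Φx) (hu : BlockLT Φu)
    (hSLS : (1 - dshift T n * blkdiag T Ahat) * Φx - dshift T n * blkdiag T Bhat * Φu = 1)
    (Φ : Matrix ((Fin (T+1) × Fin n) ⊕ (Fin (T+1) × Fin m)) (Fin (T+1) × Fin n) ℝ)
    (hΦ : Φ = Matrix.fromRows Φx Φu)
    (ΔM : Matrix (Fin (T+1) × Fin n) ((Fin (T+1) × Fin n) ⊕ (Fin (T+1) × Fin m)) ℝ)
    (hΔM : ΔM = Matrix.fromCols (blkdiag T (Ahat - A)) (blkdiag T (Bhat - B)))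
    (K : Matrix (Fin (T+1) × Fin m) (Fin (T+1) × Fin n) ℝ) (hK : K = Φu * Φx⁻¹)
    (w : (Fin (T+1) × Fin n) → ℝ)
    (y : ((Fin (T+1) × Fin n) ⊕ (Fin (T+1) × Fin m)) → ℝ)
    (hy : y = ((1 + Φ * dshift T n * ΔM)⁻¹ * Φ) *ᵥ w) :
    (y ∘ Sum.inl = (dshift T n * blkdiag T A) *ᵥ (y ∘ Sum.inl)
        + (dshift T n * blkdiag T B) *ᵥ (y ∘ Sum.inr) + w
      ∧ y ∘ Sum.inr = K *ᵥ (y ∘ Sum.inl)) ∧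
    (∀ (x : (Fin (T+1) × Fin n) → ℝ) (u : (Fin (T+1) × Fin m) → ℝ),
      (x = (dshift T n * blkdiag T A) *ᵥ x + (dshift T n * blkdiag T B) *ᵥ u + w
        ∧ u = K *ᵥ x) →
      x = y ∘ Sum.inl ∧ u = y ∘ Sum.inr) := by
  classical
  set S := dshift T n with hS
  set gs : ((Fin (T+1) × Fin n) ⊕ (Fin (T+1) × Fin m)) → ℕ :=
    Sum.elim (fun p => (p.1 : ℕ)) (fun p => (p.1 : ℕ)) with hgs
  -- grade facts for the basic matrices
  have hSg : ∀ p q : Fin (T+1) × Fin n, S p q ≠ 0 → (q.1 : ℕ) + 1 ≤ (p.1 : ℕ) := by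
    intro p q h
    by_contra hc
    apply h
    rw [hS]
    unfold dshift
    rw [if_neg]
    rintro ⟨h1, -⟩
    omega
  have hblk : ∀ {a b : ℕ} (M : Matrix (Fin a) (Fin b) ℝ)
      (p : Fin (T+1) × Fin a) (q : Fin (T+1) × Fin b),
      blkdiag T M p q ≠ 0 → (q.1 : ℕ) ≤ (p.1 : ℕ) := by
    intro a b M p q h
    by_contra hc
    apply h
    unfold blkdiag
    rw [if_neg]
    intro h1
    rw [h1] at hc
    omega
  have hΦxg : ∀ p q, Φx p q ≠ 0 → (q.1 : ℕ) ≤ (p.1 : ℕ) := by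
    intro p q h
    by_contra hc
    refine h (hx p q ?_)
    rw [Fin.lt_def]
    omega
  have hΦug : ∀ p q, Φu p q ≠ 0 → (q.1 : ℕ) ≤ (p.1 : ℕ) := by
    intro p q h
    by_contra hc
    refine h (hu p q ?_)
    rw [Fin.lt_def]
    omega
  have hΦg : ∀ p q, Φ p q ≠ 0 → (q.1 : ℕ) ≤ gs p := by
    intro p q h
    rw [hΦ] at h
    cases p with
    | inl p => exact hΦxg p q (by simpa [Matrix.fromRows_apply_inl] using h)
    | inr p => exact hΦug p q (by simpa [Matrix.fromRows_apply_inr] using h)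
  have hΔMg : ∀ p q, ΔM p q ≠ 0 → gs q ≤ (p.1 : ℕ) := by
    intro p q h
    rw [hΔM] at h
    cases q with
    | inl q => exact hblk _ p q (by simpa [Matrix.fromCols] using h)
    | inr q => exact hblk _ p q (by simpa [Matrix.fromCols] using h)
  -- strictness of the key products
  have hSΔM : ∀ p q, (S * ΔM) p q ≠ 0 → gs q + 1 ≤ (p.1 : ℕ) :=
    grade_mul (gm := fun p : Fin (T+1) × Fin n => (p.1 : ℕ) + 1) hSg
      (fun p q h => Nat.succ_le_succ (hΔMg p q h))
  have hQs : ∀ p q, (Φ * S * ΔM) p q ≠ 0 → gs q + 1 ≤ gs p := by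
    rw [Matrix.mul_assoc]
    exact grade_mul (gm := fun p : Fin (T+1) × Fin n => (p.1 : ℕ)) hΦg hSΔM
  have hPs : ∀ p q, (S * ΔM * Φ) p q ≠ 0 → (q.1 : ℕ) + 1 ≤ (p.1 : ℕ) :=
    grade_mul (gm := fun p => gs p + 1) hSΔM
      (fun p q h => Nat.succ_le_succ (hΦg p q h))
  -- Φx - 1 is strictly graded (from the SLS constraint)
  have hSLS' : Φx - S * blkdiag T Ahat * Φx - S * blkdiag T Bhat * Φu = 1 := by
    rw [← hSLS, Matrix.sub_mul, Matrix.one_mul]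
  have hE : Φx - 1 = S * blkdiag T Ahat * Φx + S * blkdiag T Bhat * Φu := by
    rw [← hSLS']
    abel
  have hEs : ∀ p q, (Φx - 1) p q ≠ 0 → (q.1 : ℕ) + 1 ≤ (p.1 : ℕ) := by
    rw [hE]
    apply grade_add
    · rw [Matrix.mul_assoc]
      exact grade_mul (gm := fun p : Fin (T+1) × Fin n => (p.1 : ℕ) + 1) hSg
        (fun p q h => Nat.succ_le_succ
          (grade_mul (gm := fun p : Fin (T+1) × Fin n => (p.1 : ℕ))
            (hblk Ahat) hΦxg p q h))
    · rw [Matrix.mul_assoc]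
      exact grade_mul (gm := fun p : Fin (T+1) × Fin n => (p.1 : ℕ) + 1) hSg
        (fun p q h => Nat.succ_le_succ
          (grade_mul (gm := fun p : Fin (T+1) × Fin m => (p.1 : ℕ))
            (hblk Bhat) hΦug p q h))
  -- invertibility
  have hgT : ∀ p : Fin (T+1) × Fin n, (p.1 : ℕ) ≤ T := fun p => Nat.lt_succ_iff.mp p.1.2
  have hgsT : ∀ p, gs p ≤ T := by
    rintro (p | p) <;> exact Nat.lt_succ_iff.mp p.1.2
  have hΦxU : IsUnit Φx := by
    have h0 : Φx = 1 + (Φx - 1) := by abel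
    rw [h0]
    exact aux_isUnit_one_add _ ⟨T+1, aux_nilpotent (fun p => (p.1 : ℕ)) T hgT _ hEs⟩
  have hPU : IsUnit (1 + S * ΔM * Φ) :=
    aux_isUnit_one_add _ ⟨T+1, aux_nilpotent (fun p => (p.1 : ℕ)) T hgT _ hPs⟩
  have hQU : IsUnit (1 + Φ * S * ΔM) :=
    aux_isUnit_one_add _ ⟨T+1, aux_nilpotent gs T hgsT _ hQs⟩
  have hΦxd : IsUnit Φx.det := (Matrix.isUnit_iff_isUnit_det _).mp hΦxU
  have hPd : IsUnit (1 + S * ΔM * Φ).det := (Matrix.isUnit_iff_isUnit_det _).mp hPU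
  have hQd : IsUnit (1 + Φ * S * ΔM).det := (Matrix.isUnit_iff_isUnit_det _).mp hQU
  -- push-through identity
  have hcomm : Φ * (1 + S * ΔM * Φ) = (1 + Φ * S * ΔM) * Φ := by
    simp only [Matrix.mul_add, Matrix.add_mul, Matrix.mul_one, Matrix.one_mul,
      Matrix.mul_assoc]
  have h2 := Matrix.mul_nonsing_inv _ hPd
  have h1 := Matrix.nonsing_inv_mul _ hQd
  have hinv : (1 + Φ * S * ΔM)⁻¹ * Φ = Φ * (1 + S * ΔM * Φ)⁻¹ := by
    have key : (1 + Φ * S * ΔM) * (Φ * (1 + S * ΔM * Φ)⁻¹) = Φ := by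
      rw [← Matrix.mul_assoc, ← hcomm, Matrix.mul_assoc, h2, Matrix.mul_one]
    calc (1 + Φ * S * ΔM)⁻¹ * Φ
        = (1 + Φ * S * ΔM)⁻¹ * ((1 + Φ * S * ΔM) * (Φ * (1 + S * ΔM * Φ)⁻¹)) := by
          rw [key]
      _ = Φ * (1 + S * ΔM * Φ)⁻¹ := by rw [← Matrix.mul_assoc, h1, Matrix.one_mul]
  -- K * Φx = Φu
  have hKΦx : K * Φx = Φu := by
    rw [hK, Matrix.mul_assoc, Matrix.nonsing_inv_mul _ hΦxd, Matrix.mul_one]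
  -- the closed-loop matrix
  set G : Matrix (Fin (T+1) × Fin n) (Fin (T+1) × Fin n) ℝ :=
    1 - S * blkdiag T A - S * blkdiag T B * K with hG
  have hGΦx : G * Φx = 1 + S * ΔM * Φ := by
    have expand : G * Φx
        = Φx - S * blkdiag T A * Φx - S * blkdiag T B * (K * Φx) := by
      rw [hG, Matrix.sub_mul, Matrix.sub_mul, Matrix.one_mul,
        Matrix.mul_assoc (S * blkdiag T B) K Φx]
    rw [expand, hKΦx, Matrix.mul_assoc S ΔM Φ, hΔM, hΦ, Matrix.fromCols_mul_fromRows,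
      blkdiag_sub, blkdiag_sub, ← hSLS']
    simp only [Matrix.mul_add, Matrix.mul_sub, Matrix.sub_mul, Matrix.add_mul,
      Matrix.mul_assoc]
    abel
  have hGd : IsUnit G.det := by
    have h0 : G.det * Φx.det = (1 + S * ΔM * Φ).det := by
      rw [← Matrix.det_mul, hGΦx]
    exact isUnit_of_mul_isUnit_left (h0 ▸ hPd)
  -- the solution vector
  set v : (Fin (T+1) × Fin n) → ℝ := (1 + S * ΔM * Φ)⁻¹ *ᵥ w with hv
  have hyv : y = Φ *ᵥ v := by
    rw [hy, hinv, hv, Matrix.mulVec_mulVec]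
  have hxl : y ∘ Sum.inl = Φx *ᵥ v := by
    funext i
    rw [Function.comp_apply, hyv, hΦ]
    simp [Matrix.mulVec, Matrix.fromRows_apply_inl, dotProduct]
  have hur : y ∘ Sum.inr = Φu *ᵥ v := by
    funext i
    rw [Function.comp_apply, hyv, hΦ]
    simp [Matrix.mulVec, Matrix.fromRows_apply_inr, dotProduct]
  have hKx : y ∘ Sum.inr = K *ᵥ (y ∘ Sum.inl) := by
    rw [hxl, hur, Matrix.mulVec_mulVec v K Φx, hKΦx]
  have hGxstar : G *ᵥ (y ∘ Sum.inl) = w := by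
    rw [hxl, Matrix.mulVec_mulVec v G Φx, hGΦx, hv,
      Matrix.mulVec_mulVec w (1 + S * ΔM * Φ) (1 + S * ΔM * Φ)⁻¹, h2, Matrix.one_mulVec]
  have hGexp : ∀ (z : (Fin (T+1) × Fin n) → ℝ),
      G *ᵥ z = z - (S * blkdiag T A) *ᵥ z - (S * blkdiag T B) *ᵥ (K *ᵥ z) := by
    intro z
    rw [hG, Matrix.sub_mulVec, Matrix.sub_mulVec, Matrix.one_mulVec,
      Matrix.mulVec_mulVec z (S * blkdiag T B) K]
  constructor
  · constructor
    · have h3 := hGxstar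
      rw [hGexp, ← hKx] at h3
      linear_combination h3
    · exact hKx
  · rintro x u ⟨hd1, hd2⟩
    have hGx : G *ᵥ x = w := by
      rw [hGexp, ← hd2]
      linear_combination hd1
    have hinj : ∀ z : (Fin (T+1) × Fin n) → ℝ, z = G⁻¹ *ᵥ (G *ᵥ z) := by
      intro z
      rw [Matrix.mulVec_mulVec z G⁻¹ G, Matrix.nonsing_inv_mul _ hGd, Matrix.one_mulVec]
    have hxeq : x = y ∘ Sum.inl := by
      rw [hinj x, hGx, ← hGxstar, ← hinj (y ∘ Sum.inl)]
    refine ⟨hxeq, ?_⟩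
    rw [hd2, hxeq, hKx]
end

section
/- Let Φ_x, Φ_u be block lower triangular satisfying (I − Z𝒜̂)Φ_x − Zℬ̂Φ_u = I, Φ = [Φ_x; Φ_u], ΔA = Â − A, ΔB = B̂ − B, Δℳ = [blkdiag_{T+1}(ΔA) blkdiag_{T+1}(ΔB)], and R_Φ = (I + ΦZΔℳ)⁻¹. Let x ∈ ℝ^{(T+1)n}, u ∈ ℝ^{(T+1)m} be arbitrary and define the true disturbance w = x − Z blkdiag_{T+1}(A) x − Z blkdiag_{T+1}(B) u and the nominal disturbance ŵ = x − Z𝒜̂x − Zℬ̂u. Then Φŵ − R_Φ Φ w = R_Φ Φ Z Δℳ (Φŵ − [x; u]). -/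
open MeasureTheory Matrix
open scoped ENNReal

/-- Algebraic identity behind Lemma 1: for any state-input data `(x, u)`,
with true disturbance `w` and nominal disturbance `ŵ`,
`Φŵ − R_Φ Φ w = R_Φ Φ Z Δℳ (Φŵ − [x; u])`. -/
theorem stmt4 {n m T : ℕ} (hn : 0 < n) (hm : 0 < m) (hT : 0 < T)
    (Ahat A : Matrix (Fin n) (Fin n) ℝ) (Bhat B : Matrix (Fin n) (Fin m) ℝ)
    (Φx : Matrix (Fin (T+1) × Fin n) (Fin (T+1) × Fin n) ℝ)
    (Φu : Matrix (Fin (T+1) × Fin m) (Fin (T+1) × Fin n) ℝ)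
    (hx : BlockLT Φx) (hu : BlockLT Φu)
    (hSLS : (1 - dshift T n * blkdiag T Ahat) * Φx - dshift T n * blkdiag T Bhat * Φu = 1)
    (Φ : Matrix ((Fin (T+1) × Fin n) ⊕ (Fin (T+1) × Fin m)) (Fin (T+1) × Fin n) ℝ)
    (hΦ : Φ = Matrix.fromRows Φx Φu)
    (ΔM : Matrix (Fin (T+1) × Fin n) ((Fin (T+1) × Fin n) ⊕ (Fin (T+1) × Fin m)) ℝ)
    (hΔM : ΔM = Matrix.fromCols (blkdiag T (Ahat - A)) (blkdiag T (Bhat - B)))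
    (RΦ : Matrix ((Fin (T+1) × Fin n) ⊕ (Fin (T+1) × Fin m))
                 ((Fin (T+1) × Fin n) ⊕ (Fin (T+1) × Fin m)) ℝ)
    (hR : RΦ = (1 + Φ * dshift T n * ΔM)⁻¹)
    (x : (Fin (T+1) × Fin n) → ℝ) (u : (Fin (T+1) × Fin m) → ℝ)
    (w what : (Fin (T+1) × Fin n) → ℝ)
    (hw : w = x - (dshift T n * blkdiag T A) *ᵥ x - (dshift T n * blkdiag T B) *ᵥ u)
    (hwhat : what = x - (dshift T n * blkdiag T Ahat) *ᵥ x
        - (dshift T n * blkdiag T Bhat) *ᵥ u) :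
    Φ *ᵥ what - (RΦ * Φ) *ᵥ w
      = (RΦ * Φ * dshift T n * ΔM) *ᵥ (Φ *ᵥ what - Sum.elim x u) := by
  set Z := dshift T n with hZdef
  set N := Φ * Z * ΔM with hNdef
  -- block index of a sum-type row/column
  set idx : ((Fin (T+1) × Fin n) ⊕ (Fin (T+1) × Fin m)) → ℕ :=
    Sum.elim (fun a => (a.1 : ℕ)) (fun a => (a.1 : ℕ)) with hidx
  -- N is strictly block lower triangular
  have hNlt : ∀ p q, idx p ≤ idx q → N p q = 0 := by
    intro p q hpq
    rw [hNdef, Matrix.mul_apply]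
    apply Finset.sum_eq_zero
    intro r _
    by_cases hr : ΔM r q = 0
    · rw [hr, mul_zero]
    · -- ΔM r q ≠ 0 forces r.1 = block of q
      have hrq : (r.1 : ℕ) = idx q := by
        rw [hΔM] at hr
        cases q with
        | inl q' =>
          by_contra h
          apply hr
          rw [Matrix.fromCols_apply_inl]
          simp only [blkdiag]
          exact if_neg (fun he => h (by rw [he]; rfl))
        | inr q' =>
          by_contra h
          apply hr
          rw [Matrix.fromCols_apply_inr]
          simp only [blkdiag]
          exact if_neg (fun he => h (by rw [he]; rfl))
      have h0 : (Φ * Z) p r = 0 := by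
        rw [Matrix.mul_apply]
        apply Finset.sum_eq_zero
        intro s _
        by_cases hz : Z s r = 0
        · rw [hz, mul_zero]
        · have hs : (s.1 : ℕ) = (r.1 : ℕ) + 1 := by
            by_contra h
            exact hz (by rw [hZdef]; simp only [dshift]; rw [if_neg (fun hc => h hc.1)])
          have hΦ0 : Φ p s = 0 := by
            rw [hΦ]
            cases p with
            | inl p' =>
              have : p'.1 < s.1 := by
                rw [Fin.lt_def, hs]
                have : (p'.1 : ℕ) ≤ idx q := hpq
                omega
              simpa using hx p' s this
            | inr p' =>
              have : p'.1 < s.1 := by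
                rw [Fin.lt_def, hs]
                have : (p'.1 : ℕ) ≤ idx q := hpq
                omega
              simpa using hu p' s this
          rw [hΦ0, zero_mul]
      rw [h0, zero_mul]
  -- hence N is nilpotent
  have hpow : ∀ k p q, idx p < idx q + k → (N ^ k) p q = 0 := by
    intro k
    induction k with
    | zero =>
      intro p q h
      rw [pow_zero]
      exact Matrix.one_apply_ne (fun he => by subst he; omega)
    | succ k ih =>
      intro p q h
      rw [pow_succ, Matrix.mul_apply]
      apply Finset.sum_eq_zero
      intro r _
      by_cases hc : idx r ≤ idx q
      · rw [hNlt r q hc, mul_zero]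
      · rw [ih p r (by omega), zero_mul]
  have hnil : IsNilpotent N := by
    refine ⟨T + 1, ?_⟩
    ext p q
    rw [Matrix.zero_apply]
    apply hpow
    have hp : idx p ≤ T := by
      cases p with
      | inl p' => exact Nat.lt_succ_iff.mp p'.1.isLt
      | inr p' => exact Nat.lt_succ_iff.mp p'.1.isLt
    omega
  have hunit : IsUnit (1 + N) := hnil.isUnit_one_add
  have hinv : RΦ * (1 + N) = 1 := by
    rw [hR]
    exact Matrix.nonsing_inv_mul _ ((Matrix.isUnit_iff_isUnit_det _).mp hunit)
  have hRN : RΦ * N = 1 - RΦ := by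
    have h1 : RΦ + RΦ * N = 1 := by
      calc RΦ + RΦ * N = RΦ * (1 + N) := by rw [mul_add, mul_one]
        _ = 1 := hinv
    exact eq_sub_of_add_eq' h1
  -- relation between w and what
  have hA' : blkdiag T (Ahat - A) = blkdiag T Ahat - blkdiag T A := by
    ext p q; by_cases h : p.1 = q.1 <;> simp [blkdiag, h]
  have hB' : blkdiag T (Bhat - B) = blkdiag T Bhat - blkdiag T B := by
    ext p q; by_cases h : p.1 = q.1 <;> simp [blkdiag, h]
  have hZM : (Z * ΔM) *ᵥ Sum.elim x u
      = (Z * blkdiag T Ahat) *ᵥ x - (Z * blkdiag T A) *ᵥ x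
        + ((Z * blkdiag T Bhat) *ᵥ u - (Z * blkdiag T B) *ᵥ u) := by
    rw [hΔM, ← Matrix.mulVec_mulVec, Matrix.fromCols_mulVec_sumElim, hA', hB',
      Matrix.sub_mulVec, Matrix.sub_mulVec, Matrix.mulVec_add, Matrix.mulVec_sub,
      Matrix.mulVec_sub, Matrix.mulVec_mulVec, Matrix.mulVec_mulVec,
      Matrix.mulVec_mulVec, Matrix.mulVec_mulVec]
  have hdiff : w = what + (Z * ΔM) *ᵥ Sum.elim x u := by
    rw [hZM, hw, hwhat]; abel
  rw [hdiff, Matrix.mulVec_add, Matrix.mulVec_mulVec]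
  have e1 : RΦ * Φ * (Z * ΔM) = RΦ * N := by rw [hNdef]; simp only [Matrix.mul_assoc]
  have e2 : RΦ * Φ * Z * ΔM = RΦ * N := by rw [hNdef]; simp only [Matrix.mul_assoc]
  rw [e1, e2, hRN, ← Matrix.mulVec_mulVec, Matrix.sub_mulVec, Matrix.sub_mulVec,
    Matrix.one_mulVec, Matrix.one_mulVec, Matrix.mulVec_sub]
  abel
end

section
/- (Lemma 2, disturbance distribution uncertainty.) Fix x₀ ∈ ℝ^n and let P, Q be probability measures on ℝ^{(T+1)n} with finite first moments, both supported on the affine set S = { w ∈ ℝ^{(T+1)n} : the first n coordinates of w equal x₀ }. Then for every matrix M ∈ ℝ^{p×(T+1)n}, d_W(M#P, M#Q) ≤ ‖MZ‖ · d_W(P, Q), where Z is the block-downshift matrix and M#P denotes the pushforward of P under x ↦ Mx. In particular, with M = R_Φ Φ this gives d_W(R_ΦΦ#P, R_ΦΦ#Q) ≤ ‖R_Φ Φ Z‖ · d_W(P, Q). -/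
open MeasureTheory Matrix
open scoped ENNReal

lemma aux_l1_nonneg {ι : Type*} [Fintype ι] (v : ι → ℝ) : 0 ≤ l1norm v :=
  Finset.sum_nonneg fun _ _ => abs_nonneg _

lemma aux_col_le_matL1 {p ι : Type*} [Fintype p] [Fintype ι]
    (A : Matrix p ι ℝ) (j : ι) : ∑ i, |A i j| ≤ matL1 A := by
  rw [matL1]
  exact le_ciSup (f := fun j => ∑ i, |A i j|) (Set.Finite.bddAbove (Set.finite_range _)) j

lemma aux_matL1_nonneg {p ι : Type*} [Fintype p] [Fintype ι] [Nonempty ι]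
    (A : Matrix p ι ℝ) : 0 ≤ matL1 A :=
  le_trans (Finset.sum_nonneg fun _ _ => abs_nonneg _)
    (aux_col_le_matL1 A (Classical.arbitrary ι))

lemma aux_l1_mulVec_le {p ι : Type*} [Fintype p] [Fintype ι] [Nonempty ι]
    (A : Matrix p ι ℝ) (v : ι → ℝ) : l1norm (A *ᵥ v) ≤ matL1 A * l1norm v := by
  have hcol : ∀ j, ∑ i, |A i j| ≤ matL1 A := aux_col_le_matL1 A
  calc l1norm (A *ᵥ v) = ∑ i, |∑ j, A i j * v j| := by
        simp [l1norm, Matrix.mulVec, dotProduct]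
    _ ≤ ∑ i, ∑ j, |A i j * v j| :=
        Finset.sum_le_sum fun i _ => Finset.abs_sum_le_sum_abs _ _
    _ = ∑ j, (∑ i, |A i j|) * |v j| := by
        rw [Finset.sum_comm]; simp [abs_mul, Finset.sum_mul]
    _ ≤ ∑ j, matL1 A * |v j| :=
        Finset.sum_le_sum fun j _ => mul_le_mul_of_nonneg_right (hcol j) (abs_nonneg _)
    _ = matL1 A * l1norm v := by rw [l1norm, Finset.mul_sum]

lemma aux_l1_sub_le {ι : Type*} [Fintype ι] (a b : ι → ℝ) :
    l1norm (a - b) ≤ l1norm a + l1norm b := by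
  rw [l1norm, l1norm, l1norm, ← Finset.sum_add_distrib]
  exact Finset.sum_le_sum fun i _ => by simpa using abs_sub (a i) (b i)

lemma aux_shift {n T : ℕ} {p : Type*} [Fintype p] (hn : 0 < n) (hT : 0 < T)
    (M : Matrix p (Fin (T+1) × Fin n) ℝ) (v : Fin (T+1) × Fin n → ℝ)
    (hv : ∀ j, v (0, j) = 0) :
    l1norm (M *ᵥ v) ≤ matL1 (M * dshift T n) * l1norm v := by
  haveI : Nonempty (Fin n) := ⟨⟨0, hn⟩⟩
  set u : Fin (T+1) × Fin n → ℝ := fun q => v (q.1 + 1, q.2) with hu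
  have claim1 : dshift T n *ᵥ u = v := by
    funext q
    obtain ⟨t, j⟩ := q
    show ∑ q : Fin (T+1) × Fin n,
        (if (t : ℕ) = (q.1 : ℕ) + 1 ∧ j = q.2 then (1:ℝ) else 0) * u q = v (t, j)
    rcases Nat.eq_zero_or_pos (t : ℕ) with h0 | hpos
    · have ht : t = 0 := Fin.ext (by simpa using h0)
      subst ht
      rw [Finset.sum_eq_zero, hv]
      intro q _
      rw [if_neg, zero_mul]
      rintro ⟨h1, -⟩
      simp at h1
    · obtain ⟨s, hs⟩ : ∃ s, (t : ℕ) = s + 1 := ⟨(t : ℕ) - 1, by omega⟩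
      have hsT : s < T := by have := t.isLt; omega
      have h1 : ((1 : Fin (T+1)) : ℕ) = 1 := by
        rw [Fin.val_one']
        exact Nat.mod_eq_of_lt (by omega)
      have key : (⟨s, by omega⟩ : Fin (T+1)) + 1 = t := by
        apply Fin.ext
        simp only [Fin.val_add, h1, Fin.val_mk]
        rw [Nat.mod_eq_of_lt (by omega)]
        omega
      rw [Finset.sum_eq_single (⟨⟨s, by omega⟩, j⟩ : Fin (T+1) × Fin n)]
      · rw [if_pos ⟨by simpa using hs, rfl⟩, one_mul]
        show v ((⟨s, by omega⟩ : Fin (T+1)) + 1, j) = v (t, j)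
        rw [key]
      · rintro ⟨q1, q2⟩ _ hq
        rw [if_neg, zero_mul]
        rintro ⟨h1, h2⟩
        apply hq
        have hq1 : (q1 : ℕ) = s := by simp only [] at h1; omega
        refine Prod.ext ?_ ?_
        · exact Fin.ext (by simpa using hq1)
        · exact h2.symm
      · intro h; exact absurd (Finset.mem_univ _) h
  have claim2 : l1norm u = l1norm v := by
    rw [l1norm, l1norm]
    exact Fintype.sum_equiv ((Equiv.addRight (1 : Fin (T+1))).prodCongr (Equiv.refl _))
      _ _ (fun q => rfl)
  calc l1norm (M *ᵥ v) = l1norm ((M * dshift T n) *ᵥ u) := by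
        rw [← Matrix.mulVec_mulVec, claim1]
    _ ≤ matL1 (M * dshift T n) * l1norm u := aux_l1_mulVec_le _ _
    _ = matL1 (M * dshift T n) * l1norm v := by rw [claim2]

open scoped Pointwise in
/-- **Lemma 2, disturbance distribution uncertainty.** If `P, Q` are both
supported on the affine set of vectors whose first `n` coordinates equal `x₀`, then for any
matrix `M` (in particular `M = R_Φ Φ`), `d_W(M#P, M#Q) ≤ ‖MZ‖ d_W(P, Q)`. -/
theorem stmt8 {n T : ℕ} {p : Type*} [Fintype p] (hn : 0 < n) (hT : 0 < T)
    (x0 : Fin n → ℝ)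
    (P Q : Measure ((Fin (T+1) × Fin n) → ℝ))
    [IsProbabilityMeasure P] [IsProbabilityMeasure Q]
    (hPmom : Integrable (fun v => l1norm v) P) (hQmom : Integrable (fun v => l1norm v) Q)
    (hPsupp : ∀ᵐ w ∂P, ∀ j, w (0, j) = x0 j)
    (hQsupp : ∀ᵐ w ∂Q, ∀ j, w (0, j) = x0 j)
    (M : Matrix p (Fin (T+1) × Fin n) ℝ) :
    wass (P.map (fun v => M *ᵥ v)) (Q.map (fun v => M *ᵥ v))
      ≤ matL1 (M * dshift T n) * wass P Q := by
  classical
  haveI : Nonempty (Fin n) := ⟨⟨0, hn⟩⟩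
  set f : ((Fin (T+1) × Fin n) → ℝ) → (p → ℝ) := fun v => M *ᵥ v with hfdef
  have hf : Measurable f := by
    apply measurable_pi_lambda
    intro i
    simp only [hfdef, Matrix.mulVec, dotProduct]
    exact Finset.measurable_sum _ fun j _ => (measurable_pi_apply j).const_mul _
  set C := matL1 (M * dshift T n) with hC
  have hC0 : 0 ≤ C := aux_matL1_nonneg _
  have hl1cont : Continuous (fun v : (Fin (T+1) × Fin n) → ℝ => l1norm v) := by
    unfold l1norm
    exact continuous_finset_sum _ fun i _ => (continuous_apply i).abs
  have hl1contp : Continuous (fun v : p → ℝ => l1norm v) := by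
    unfold l1norm
    exact continuous_finset_sum _ fun i _ => (continuous_apply i).abs
  have hcost : Continuous (fun q : ((Fin (T+1) × Fin n) → ℝ) × ((Fin (T+1) × Fin n) → ℝ) =>
      l1norm (q.1 - q.2)) := hl1cont.comp (continuous_fst.sub continuous_snd)
  have hcostp : Continuous (fun q : (p → ℝ) × (p → ℝ) => l1norm (q.1 - q.2)) :=
    hl1contp.comp (continuous_fst.sub continuous_snd)
  have hs : MeasurableSet {w : (Fin (T+1) × Fin n) → ℝ | ∀ j, w (0, j) = x0 j} := by
    have heq : {w : (Fin (T+1) × Fin n) → ℝ | ∀ j, w (0, j) = x0 j}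
        = ⋂ j, (fun w : (Fin (T+1) × Fin n) → ℝ => w (0, j)) ⁻¹' {x0 j} := by
      ext w; simp [Set.mem_iInter]
    rw [heq]
    exact MeasurableSet.iInter fun j => (measurable_pi_apply _) (measurableSet_singleton _)
  set A : Set ℝ := { r | ∃ π : Measure (((Fin (T+1) × Fin n) → ℝ) × ((Fin (T+1) × Fin n) → ℝ)),
    IsProbabilityMeasure π ∧ π.map Prod.fst = P ∧ π.map Prod.snd = Q ∧
    r = ∫ q, l1norm (q.1 - q.2) ∂π } with hA
  set A' : Set ℝ := { r | ∃ π : Measure ((p → ℝ) × (p → ℝ)),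
    IsProbabilityMeasure π ∧ π.map Prod.fst = P.map f ∧ π.map Prod.snd = Q.map f ∧
    r = ∫ q, l1norm (q.1 - q.2) ∂π } with hA'
  have hwass1 : wass (P.map f) (Q.map f) = sInf A' := rfl
  have hwass2 : wass P Q = sInf A := rfl
  have hbddA' : BddBelow A' := by
    refine ⟨0, ?_⟩
    rintro r ⟨π', _, _, _, rfl⟩
    exact integral_nonneg fun q => aux_l1_nonneg _
  have key : ∀ r ∈ A, wass (P.map f) (Q.map f) ≤ C * r := by
    rintro r ⟨π, hπprob, hπ1, hπ2, rfl⟩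
    haveI := hπprob
    have hmm : Measurable (Prod.map f f) := hf.prodMap hf
    have hintfst : Integrable (fun q : ((Fin (T+1) × Fin n) → ℝ) × ((Fin (T+1) × Fin n) → ℝ) =>
        l1norm q.1) π := by
      rw [← hπ1] at hPmom
      exact (integrable_map_measure hl1cont.aestronglyMeasurable
        measurable_fst.aemeasurable).mp hPmom
    have hintsnd : Integrable (fun q : ((Fin (T+1) × Fin n) → ℝ) × ((Fin (T+1) × Fin n) → ℝ) =>
        l1norm q.2) π := by
      rw [← hπ2] at hQmom
      exact (integrable_map_measure hl1cont.aestronglyMeasurable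
        measurable_snd.aemeasurable).mp hQmom
    have hint : Integrable (fun q : ((Fin (T+1) × Fin n) → ℝ) × ((Fin (T+1) × Fin n) → ℝ) =>
        l1norm (q.1 - q.2)) π := by
      refine (hintfst.add hintsnd).mono' hcost.aestronglyMeasurable ?_
      filter_upwards with q
      rw [Real.norm_eq_abs, abs_of_nonneg (aux_l1_nonneg _)]
      exact aux_l1_sub_le _ _
    have hae1 : ∀ᵐ q ∂π, ∀ j, q.1 (0, j) = x0 j := by
      rw [← hπ1] at hPsupp
      exact (ae_map_iff measurable_fst.aemeasurable hs).mp hPsupp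
    have hae2 : ∀ᵐ q ∂π, ∀ j, q.2 (0, j) = x0 j := by
      rw [← hπ2] at hQsupp
      exact (ae_map_iff measurable_snd.aemeasurable hs).mp hQsupp
    have haebound : ∀ᵐ q ∂π, l1norm (f q.1 - f q.2) ≤ C * l1norm (q.1 - q.2) := by
      filter_upwards [hae1, hae2] with q h1 h2
      have hsub : f q.1 - f q.2 = M *ᵥ (q.1 - q.2) := (Matrix.mulVec_sub M _ _).symm
      rw [hsub]
      exact aux_shift hn hT M _ (fun j => by simp [h1 j, h2 j])
    have hintf : Integrable (fun q : ((Fin (T+1) × Fin n) → ℝ) × ((Fin (T+1) × Fin n) → ℝ) =>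
        l1norm (f q.1 - f q.2)) π := by
      refine (hint.const_mul C).mono' (hcostp.measurable.comp hmm).aestronglyMeasurable ?_
      filter_upwards [haebound] with q hq
      rw [Real.norm_eq_abs, abs_of_nonneg (aux_l1_nonneg _)]
      exact hq
    have hle : ∫ q, l1norm (f q.1 - f q.2) ∂π ≤ C * ∫ q, l1norm (q.1 - q.2) ∂π := by
      calc ∫ q, l1norm (f q.1 - f q.2) ∂π
          ≤ ∫ q, C * l1norm (q.1 - q.2) ∂π :=
            integral_mono_ae hintf (hint.const_mul C) haebound
        _ = C * ∫ q, l1norm (q.1 - q.2) ∂π := integral_const_mul C _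
    have hmem : (∫ q, l1norm (q.1 - q.2) ∂(π.map (Prod.map f f))) ∈ A' := by
      refine ⟨π.map (Prod.map f f), Measure.isProbabilityMeasure_map hmm.aemeasurable, ?_, ?_, rfl⟩
      · rw [Measure.map_map measurable_fst hmm]
        have h : (Prod.fst ∘ Prod.map f f :
            ((Fin (T+1) × Fin n) → ℝ) × ((Fin (T+1) × Fin n) → ℝ) → (p → ℝ)) = f ∘ Prod.fst := rfl
        rw [h, ← Measure.map_map hf measurable_fst, hπ1]
      · rw [Measure.map_map measurable_snd hmm]
        have h : (Prod.snd ∘ Prod.map f f :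
            ((Fin (T+1) × Fin n) → ℝ) × ((Fin (T+1) × Fin n) → ℝ) → (p → ℝ)) = f ∘ Prod.snd := rfl
        rw [h, ← Measure.map_map hf measurable_snd, hπ2]
    have heq : ∫ q, l1norm (q.1 - q.2) ∂(π.map (Prod.map f f))
        = ∫ q, l1norm (f q.1 - f q.2) ∂π :=
      integral_map hmm.aemeasurable hcostp.aestronglyMeasurable
    calc wass (P.map f) (Q.map f)
        ≤ ∫ q, l1norm (q.1 - q.2) ∂(π.map (Prod.map f f)) := by
          rw [hwass1]; exact csInf_le hbddA' hmem
      _ = ∫ q, l1norm (f q.1 - f q.2) ∂π := heq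
      _ ≤ C * ∫ q, l1norm (q.1 - q.2) ∂π := hle
  have hAne : A.Nonempty := by
    refine ⟨∫ q, l1norm (q.1 - q.2) ∂(P.prod Q), P.prod Q, inferInstance, ?_, ?_, rfl⟩
    · rw [Measure.map_fst_prod]; simp
    · rw [Measure.map_snd_prod]; simp
  have hfinal : wass (P.map f) (Q.map f) ≤ sInf (C • A) := by
    apply le_csInf (hAne.smul_set)
    rintro b hb
    obtain ⟨r, hr, rfl⟩ := Set.mem_smul_set.mp hb
    rw [smul_eq_mul]
    exact key r hr
  rw [Real.sInf_smul_of_nonneg hC0, smul_eq_mul, ← hwass2] at hfinal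
  exact hfinal
end
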